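/- Tame inversion of a diagonal operator with nonresonant eigenvalues: let d ≥ 1, τ > 0, γ > 0, ω ∈ ℝ^d, and let μ_j ∈ ℂ (j ∈ ℤ_{≥1}) satisfy the first Melnikov conditions |iω·ℓ + μ_j| ≥ 2γ j² ⟨ℓ⟩^{−τ} for all ℓ ∈ ℤ^d and j ≥ 1. Given g : ℤ^d × ℤ_{≥1} → ℂ, define h : ℤ^d × ℤ_{≥1} → ℂ by h_j(ℓ) := g_j(ℓ)/(iω·ℓ + μ_j). Then for every s ≥ 0: ‖h‖_s ≤ (2γ)^{−1} ‖g‖_{s+τ}. -/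

import Mathlib

open scoped ENNReal NNReal

/-- The weight `⟨(ℓ,j)⟩ = max(1, max(|ℓ|, j))` with `|ℓ|` the sup norm. -/
noncomputable def wgtLJ {d : ℕ} (ℓ : Fin d → ℤ) (j : ℕ) : ℝ≥0∞ :=
  ((max 1 (max (Finset.univ.sup fun i => (ℓ i).natAbs) j) : ℕ) : ℝ≥0∞)

/-- The weighted ℓ² norm `‖u‖ₛ = (Σ_{ℓ∈ℤᵈ, j≥1} ⟨(ℓ,j)⟩^{2s}|u_j(ℓ)|²)^{1/2}`. -/
noncomputable def wnormLJ (d : ℕ) (s : ℝ) (u : (Fin d → ℤ) → ℕ → ℂ) : ℝ≥0∞ :=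
  (∑' p : (Fin d → ℤ) × {j : ℕ // 1 ≤ j},
      wgtLJ p.1 (p.2 : ℕ) ^ (2 * s) * (‖u p.1 (p.2 : ℕ)‖₊ : ℝ≥0∞) ^ (2 : ℕ)) ^ (1 / 2 : ℝ)

/-- Tame inversion of a diagonal operator with nonresonant eigenvalues: if the
first Melnikov conditions `|iω·ℓ + μ_j| ≥ 2γ j² ⟨ℓ⟩^{−τ}` hold and
`h_j(ℓ) = g_j(ℓ)/(iω·ℓ + μ_j)`, then `‖h‖ₛ ≤ (2γ)⁻¹ ‖g‖_{s+τ}` for every `s ≥ 0`. -/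
theorem diagonal_tame_inversion (d : ℕ) (hd : 1 ≤ d) (τ γ : ℝ) (hτ : 0 < τ) (hγ : 0 < γ)
    (ω : Fin d → ℝ) (μ : ℕ → ℂ)
    (hmel : ∀ (ℓ : Fin d → ℤ) (j : ℕ), 1 ≤ j →
      2 * γ * (j : ℝ) ^ 2 / ((max 1 (Finset.univ.sup fun i => (ℓ i).natAbs) : ℕ) : ℝ) ^ τ ≤
        ‖Complex.I * ((∑ i, ω i * (ℓ i : ℝ) : ℝ) : ℂ) + μ j‖)
    (g h : (Fin d → ℤ) → ℕ → ℂ)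
    (hh : ∀ (ℓ : Fin d → ℤ) (j : ℕ), 1 ≤ j →
      h ℓ j = g ℓ j / (Complex.I * ((∑ i, ω i * (ℓ i : ℝ) : ℝ) : ℂ) + μ j)) :
    ∀ s : ℝ, 0 ≤ s →
      wnormLJ d s h ≤ ENNReal.ofReal (1 / (2 * γ)) * wnormLJ d (s + τ) g := by
  intro s hs
  set C : ℝ≥0∞ := ENNReal.ofReal (1 / (2 * γ)) with hCdef
  have key : ∀ p : (Fin d → ℤ) × {j : ℕ // 1 ≤ j},
      wgtLJ p.1 (p.2 : ℕ) ^ (2 * s) * (‖h p.1 (p.2 : ℕ)‖₊ : ℝ≥0∞) ^ (2 : ℕ)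
        ≤ C ^ (2 : ℕ) *
          (wgtLJ p.1 (p.2 : ℕ) ^ (2 * (s + τ)) * (‖g p.1 (p.2 : ℕ)‖₊ : ℝ≥0∞) ^ (2 : ℕ)) := by
    rintro ⟨ℓ, j, hj⟩
    set A : ℕ := max 1 (Finset.univ.sup fun i => (ℓ i).natAbs) with hAdef
    have hA1 : (1 : ℝ) ≤ (A : ℝ) := by exact_mod_cast Nat.one_le_iff_ne_zero.mpr (by simp [hAdef])
    have hApow : (0 : ℝ) < (A : ℝ) ^ τ := Real.rpow_pos_of_pos (by linarith) τ
    set D : ℂ := Complex.I * ((∑ i, ω i * (ℓ i : ℝ) : ℝ) : ℂ) + μ j with hDdef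
    have hj1 : (1 : ℝ) ≤ (j : ℝ) := by exact_mod_cast hj
    have hmel' : 2 * γ / (A : ℝ) ^ τ ≤ ‖D‖ := by
      refine le_trans ?_ (hmel ℓ j hj)
      have hj2 : (1 : ℝ) ≤ (j : ℝ) ^ 2 := by nlinarith
      apply div_le_div_of_nonneg_right ?_ hApow.le
      nlinarith [mul_le_mul_of_nonneg_left hj2 hγ.le]
    have hD0 : 0 < ‖D‖ := lt_of_lt_of_le (by positivity) hmel'
    -- real inequality
    have hreal : ‖h ℓ j‖ ≤ 1 / (2 * γ) * (A : ℝ) ^ τ * ‖g ℓ j‖ := by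
      rw [hh ℓ j hj, norm_div]
      have : ‖D‖ = ‖D‖ := rfl
      rw [div_le_iff₀ (by rw [this]; exact hD0)]
      calc ‖g ℓ j‖ = 1 / (2 * γ) * (A : ℝ) ^ τ * ‖g ℓ j‖ * (2 * γ / (A : ℝ) ^ τ) := by
            field_simp
        _ ≤ 1 / (2 * γ) * (A : ℝ) ^ τ * ‖g ℓ j‖ * ‖D‖ := by
            apply mul_le_mul_of_nonneg_left (by rw [this]; exact hmel') (by positivity)
    -- ENNReal inequality on coefficients
    have hcoe : (‖h ℓ j‖₊ : ℝ≥0∞) ≤ C * ((A : ℝ≥0∞) ^ τ * (‖g ℓ j‖₊ : ℝ≥0∞)) := by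
      have hthis := ENNReal.ofReal_le_ofReal hreal
      rw [ENNReal.ofReal_mul (by positivity), ENNReal.ofReal_mul (by positivity)] at hthis
      have heq : ENNReal.ofReal ((A : ℝ) ^ τ) = (A : ℝ≥0∞) ^ τ := by
        rw [← ENNReal.ofReal_rpow_of_pos (by linarith : (0:ℝ) < (A : ℝ)),
          ENNReal.ofReal_natCast]
      rw [heq] at hthis
      rw [show (‖h ℓ j‖₊ : ℝ≥0∞) = ENNReal.ofReal ‖h ℓ j‖ from (ofReal_norm _).symm,
        show (‖g ℓ j‖₊ : ℝ≥0∞) = ENNReal.ofReal ‖g ℓ j‖ from (ofReal_norm _).symm]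
      exact hthis.trans_eq (mul_assoc _ _ _)
    -- A ≤ W
    have hW0 : wgtLJ ℓ j ≠ 0 := by
      simp [wgtLJ]
    have hWtop : wgtLJ ℓ j ≠ ⊤ := by simp [wgtLJ]
    have hAW : (A : ℝ≥0∞) ^ τ ≤ wgtLJ ℓ j ^ τ := by
      apply ENNReal.rpow_le_rpow ?_ (le_of_lt hτ)
      unfold wgtLJ
      exact_mod_cast max_le_max (le_refl 1) (le_max_left _ _)
    have hcoe2 : (‖h ℓ j‖₊ : ℝ≥0∞) ≤ C * (wgtLJ ℓ j ^ τ * (‖g ℓ j‖₊ : ℝ≥0∞)) := by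
      refine le_trans hcoe ?_
      gcongr
    calc wgtLJ ℓ j ^ (2 * s) * (‖h ℓ j‖₊ : ℝ≥0∞) ^ (2 : ℕ)
        ≤ wgtLJ ℓ j ^ (2 * s) * (C * (wgtLJ ℓ j ^ τ * (‖g ℓ j‖₊ : ℝ≥0∞))) ^ (2 : ℕ) := by
          gcongr
      _ = C ^ (2 : ℕ) * (wgtLJ ℓ j ^ (2 * (s + τ)) * (‖g ℓ j‖₊ : ℝ≥0∞) ^ (2 : ℕ)) := by
          have h1 : (wgtLJ ℓ j ^ τ) ^ (2 : ℕ) = wgtLJ ℓ j ^ (τ * 2) := by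
            rw [← ENNReal.rpow_natCast (wgtLJ ℓ j ^ τ), ← ENNReal.rpow_mul]
            norm_num
          have h2 : wgtLJ ℓ j ^ (2 * s) * wgtLJ ℓ j ^ (τ * 2) = wgtLJ ℓ j ^ (2 * (s + τ)) := by
            rw [← ENNReal.rpow_add _ _ hW0 hWtop]
            ring_nf
          rw [mul_pow, mul_pow, h1,
            show wgtLJ ℓ j ^ (2 * s) * (C ^ (2:ℕ) * (wgtLJ ℓ j ^ (τ * 2) * (‖g ℓ j‖₊ : ℝ≥0∞) ^ (2:ℕ)))
              = C ^ (2:ℕ) * ((wgtLJ ℓ j ^ (2 * s) * wgtLJ ℓ j ^ (τ * 2)) * (‖g ℓ j‖₊ : ℝ≥0∞) ^ (2:ℕ)) from by ring,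
            h2]
  unfold wnormLJ
  have hsum := ENNReal.tsum_le_tsum key
  rw [ENNReal.tsum_mul_left] at hsum
  calc (∑' p : (Fin d → ℤ) × {j : ℕ // 1 ≤ j},
      wgtLJ p.1 (p.2 : ℕ) ^ (2 * s) * (‖h p.1 (p.2 : ℕ)‖₊ : ℝ≥0∞) ^ (2 : ℕ)) ^ (1 / 2 : ℝ)
      ≤ (C ^ (2 : ℕ) * ∑' p : (Fin d → ℤ) × {j : ℕ // 1 ≤ j},
          wgtLJ p.1 (p.2 : ℕ) ^ (2 * (s + τ)) * (‖g p.1 (p.2 : ℕ)‖₊ : ℝ≥0∞) ^ (2 : ℕ)) ^ (1 / 2 : ℝ) :=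
        ENNReal.rpow_le_rpow hsum (by norm_num)
    _ = C * (∑' p : (Fin d → ℤ) × {j : ℕ // 1 ≤ j},
          wgtLJ p.1 (p.2 : ℕ) ^ (2 * (s + τ)) * (‖g p.1 (p.2 : ℕ)‖₊ : ℝ≥0∞) ^ (2 : ℕ)) ^ (1 / 2 : ℝ) := by
        rw [ENNReal.mul_rpow_of_nonneg _ _ (by norm_num)]
        congr 1
        rw [← ENNReal.rpow_natCast C, ← ENNReal.rpow_mul]
        norm_num
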